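/- Let g, h : ℝ³ → ℂ be Schwartz functions. Then ∫_{ℝ³} conj(h(k)) · g(k) · e^{i|k|t} dk → 0 as t → ∞. -/

import Mathlib

open MeasureTheory Filter Metric Set

noncomputable section

namespace RadialRL

local notation "𝔼" => EuclideanSpace ℝ (Fin 3)

abbrev nu : Measure (sphere (0:𝔼) 1) := (volume : Measure 𝔼).toSphere

lemma nu_finite : IsFiniteMeasure nu := by
  constructor
  rw [Measure.toSphere_apply_univ]
  exact ENNReal.mul_lt_top (by simp) measure_ball_lt_top

/-- Polar-coordinate representation: the radial oscillatory integral of an integrable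
function on `ℝ³` equals a 1D oscillatory integral of an integrable function. -/
lemma polar_repr (F : 𝔼 → ℂ) (hF : Integrable F) :
    ∃ G : ℝ → ℂ, Integrable G ∧ ∀ t : ℝ,
      (∫ k : 𝔼, F k * Complex.exp (Complex.I * ((‖k‖ * t : ℝ) : ℂ)))
        = ∫ r : ℝ, G r * Complex.exp (Complex.I * ((r * t : ℝ) : ℂ)) := by
  haveI := nu_finite
  set n : ℕ := Module.finrank ℝ 𝔼 - 1 with hn
  set Λ : Measure (Ioi (0:ℝ)) := Measure.volumeIoiPow n with hΛ
  set c : Measure ({0}ᶜ : Set 𝔼) := (volume : Measure 𝔼).comap Subtype.val with hc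
  have hemb0 : MeasurableEmbedding (Subtype.val : ({0}ᶜ : Set 𝔼) → 𝔼) :=
    MeasurableEmbedding.subtype_coe (measurableSet_singleton (0:𝔼)).compl
  have hmp : MeasurePreserving (homeomorphUnitSphereProd 𝔼) c (nu.prod Λ) :=
    (volume : Measure 𝔼).measurePreserving_homeomorphUnitSphereProd
  have hmap : Measure.map Subtype.val c = (volume : Measure 𝔼) := by
    rw [hc, map_comap_subtype_coe (measurableSet_singleton (0:𝔼)).compl,
      restrict_compl_singleton]
  -- transfer of integrals and integrability through polar coordinates
  have key : ∀ Φ : 𝔼 → ℂ, Integrable Φ →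
      Integrable (fun p : sphere (0:𝔼) 1 × Ioi (0:ℝ) => Φ ((p.2 : ℝ) • (p.1 : 𝔼))) (nu.prod Λ)
      ∧ (∫ k, Φ k) = ∫ p : sphere (0:𝔼) 1 × Ioi (0:ℝ), Φ ((p.2 : ℝ) • (p.1 : 𝔼)) ∂(nu.prod Λ) := by
    intro Φ hΦ
    have hcomp : Integrable (fun x : ({0}ᶜ : Set 𝔼) => Φ x.1) c := by
      have h1 : Integrable Φ (Measure.map Subtype.val c) := hmap ▸ hΦ
      exact hemb0.integrable_map_iff.mp h1
    have hfun : ((fun p : sphere (0:𝔼) 1 × Ioi (0:ℝ) => Φ ((p.2 : ℝ) • (p.1 : 𝔼)))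
        ∘ (homeomorphUnitSphereProd 𝔼)) = fun x : ({0}ᶜ : Set 𝔼) => Φ x.1 := by
      funext x
      simp only [Function.comp_apply, homeomorphUnitSphereProd_apply_snd_coe,
        homeomorphUnitSphereProd_apply_fst_coe]
      rw [smul_inv_smul₀ (norm_ne_zero_iff.2 x.2)]
    constructor
    · exact (hmp.integrable_comp_emb (Homeomorph.measurableEmbedding _)).mp (hfun ▸ hcomp)
    · calc ∫ k, Φ k = ∫ x : ({0}ᶜ : Set 𝔼), Φ x.1 ∂c := by
            rw [hc, integral_subtype_comap (measurableSet_singleton (0:𝔼)).compl,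
              restrict_compl_singleton]
        _ = _ := by
            rw [← hmp.integral_comp (Homeomorph.measurableEmbedding _)
              (fun p : sphere (0:𝔼) 1 × Ioi (0:ℝ) => Φ ((p.2 : ℝ) • (p.1 : 𝔼)))]
            exact integral_congr_ae (Eventually.of_forall fun x => (congrFun hfun x).symm)
  -- the spherical average
  set S : ℝ → ℂ := fun r => ∫ y : sphere (0:𝔼) 1, F (r • (y : 𝔼)) ∂nu with hS
  set G : ℝ → ℂ := (Ioi (0:ℝ)).indicator (fun r => (r ^ n : ℝ) • S r) with hG
  have hnorm : ∀ (r : Ioi (0:ℝ)) (y : sphere (0:𝔼) 1), ‖(r : ℝ) • (y : 𝔼)‖ = (r : ℝ) := by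
    intro r y
    rw [norm_smul, mem_sphere_zero_iff_norm.mp y.2, mul_one, Real.norm_eq_abs,
      abs_of_pos r.2]
  -- integrability of G
  obtain ⟨hInt0, -⟩ := key F hF
  have hSint : Integrable (fun r : Ioi (0:ℝ) => S (r : ℝ)) Λ := by
    have := hInt0.integral_prod_right
    exact this
  have hSint2 : Integrable (fun r : Ioi (0:ℝ) =>
      ((r : ℝ) ^ n).toNNReal • S (r : ℝ)) (Measure.comap Subtype.val volume) := by
    rw [hΛ, Measure.volumeIoiPow] at hSint
    simp only [ENNReal.ofReal] at hSint
    exact (integrable_withDensity_iff_integrable_smul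
      ((measurable_subtype_coe.pow_const _).real_toNNReal)).mp hSint
  have hGint : Integrable G := by
    rw [hG, integrable_indicator_iff measurableSet_Ioi]
    have hmap2 : Measure.map Subtype.val (Measure.comap Subtype.val (volume : Measure ℝ))
        = (volume : Measure ℝ).restrict (Ioi (0:ℝ)) :=
      map_comap_subtype_coe measurableSet_Ioi _
    have h1 : Integrable (fun r : ℝ => (r ^ n).toNNReal • S r)
        ((volume : Measure ℝ).restrict (Ioi (0:ℝ))) := by
      rw [← hmap2]
      rw [(MeasurableEmbedding.subtype_coe measurableSet_Ioi).integrable_map_iff]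
      exact hSint2
    refine h1.congr ?_
    filter_upwards [ae_restrict_mem measurableSet_Ioi] with r hr
    rw [NNReal.smul_def, Real.coe_toNNReal _ (pow_nonneg (le_of_lt hr) _)]
  refine ⟨G, hGint, fun t => ?_⟩
  -- the oscillatory integrand
  set Φ : 𝔼 → ℂ := fun k => F k * Complex.exp (Complex.I * ((‖k‖ * t : ℝ) : ℂ)) with hΦdef
  have hΦ : Integrable Φ := by
    have hbm : Integrable (fun k : 𝔼 =>
        Complex.exp (Complex.I * ((‖k‖ * t : ℝ) : ℂ)) * F k) :=
      hF.bdd_mul (c := 1)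
        ((Complex.continuous_exp.comp (by fun_prop)).aestronglyMeasurable)
        (Eventually.of_forall fun k => by
          rw [Complex.norm_exp]; simp)
    exact hbm.congr (Eventually.of_forall fun k => mul_comm _ _)
  obtain ⟨hΦp, hΦe⟩ := key Φ hΦ
  rw [hΦe]
  rw [integral_prod_symm _ hΦp]
  have inner_eq : ∀ r : Ioi (0:ℝ),
      (∫ y : sphere (0:𝔼) 1, Φ ((r : ℝ) • (y : 𝔼)) ∂nu)
        = S (r : ℝ) * Complex.exp (Complex.I * (((r : ℝ) * t : ℝ) : ℂ)) := by
    intro r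
    rw [hS]
    rw [← integral_mul_const]
    refine integral_congr_ae (Eventually.of_forall fun y => ?_)
    rw [hΦdef]
    simp only
    rw [hnorm r y]
  calc (∫ r : Ioi (0:ℝ), ∫ y : sphere (0:𝔼) 1, Φ ((r : ℝ) • (y : 𝔼)) ∂nu ∂Λ)
      = ∫ r : Ioi (0:ℝ), ((r:ℝ) ^ n).toNNReal •
          (S (r:ℝ) * Complex.exp (Complex.I * (((r:ℝ) * t : ℝ) : ℂ)))
          ∂(Measure.comap Subtype.val volume) := by
        rw [hΛ, Measure.volumeIoiPow]
        simp only [ENNReal.ofReal]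
        rw [integral_withDensity_eq_integral_smul
          ((measurable_subtype_coe.pow_const _).real_toNNReal)]
        exact integral_congr_ae (Eventually.of_forall fun r => by
          dsimp only; rw [inner_eq r])
    _ = ∫ r in Ioi (0:ℝ), (r ^ n).toNNReal •
          (S r * Complex.exp (Complex.I * ((r * t : ℝ) : ℂ))) :=
        integral_subtype_comap measurableSet_Ioi
          (fun a : ℝ => (a ^ n).toNNReal • (S a * Complex.exp (Complex.I * ((a * t : ℝ) : ℂ))))
    _ = ∫ r in Ioi (0:ℝ), ((r ^ n : ℝ) • S r) * Complex.exp (Complex.I * ((r * t : ℝ) : ℂ)) := by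
        refine setIntegral_congr_fun measurableSet_Ioi fun r hr => ?_
        rw [NNReal.smul_def, Real.coe_toNNReal _ (pow_nonneg (le_of_lt hr) _),
          smul_mul_assoc]
    _ = ∫ r : ℝ, G r * Complex.exp (Complex.I * ((r * t : ℝ) : ℂ)) := by
        rw [hG, ← integral_indicator measurableSet_Ioi]
        refine integral_congr_ae (Eventually.of_forall fun r => ?_)
        rw [Set.indicator_mul_left]

/-- 1D Riemann–Lebesgue for the phase `e^{irt}` as `t → ∞`. -/
lemma rl_one_dim (G : ℝ → ℂ) (hG : Integrable G) :
    Tendsto (fun t : ℝ => ∫ r : ℝ, G r * Complex.exp (Complex.I * ((r * t : ℝ) : ℂ)))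
      atTop (nhds 0) := by
  have h0 := Real.tendsto_integral_exp_smul_cocompact G
  have hφ : Tendsto (fun t : ℝ => -(t / (2 * Real.pi))) atTop (Filter.cocompact ℝ) := by
    have h1 : Tendsto (fun t : ℝ => t / (2 * Real.pi)) atTop atTop :=
      tendsto_id.atTop_div_const (by positivity)
    have h2 : Tendsto (fun t : ℝ => -(t / (2 * Real.pi))) atTop atBot :=
      tendsto_neg_atBot_iff.mpr h1
    exact h2.mono_right atBot_le_cocompact
  have := h0.comp hφ
  refine this.congr fun t => ?_
  simp only [Function.comp_apply]
  refine integral_congr_ae (Eventually.of_forall fun r => ?_)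
  dsimp only
  rw [Circle.smul_def, Real.fourierChar_apply, mul_comm]
  rw [smul_eq_mul, mul_comm,
    show 2 * Real.pi * -(r * -(t / (2 * Real.pi))) = r * t from by field_simp]
end RadialRL

/-- Riemann–Lebesgue-type statement with the radial phase `ω(k) = |k|`:
for Schwartz functions `g, h` on `ℝ³`,
`∫ conj(h(k)) g(k) e^{i|k|t} dk → 0` as `t → ∞`. -/
theorem radial_riemann_lebesgue
    (g h : SchwartzMap (EuclideanSpace ℝ (Fin 3)) ℂ) :
    Tendsto
      (fun t : ℝ => ∫ (k : EuclideanSpace ℝ (Fin 3)),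
        (starRingEnd ℂ) (h k) * g k * Complex.exp (Complex.I * ((‖k‖ * t : ℝ) : ℂ)))
      atTop (nhds 0) := by
  set F : EuclideanSpace ℝ (Fin 3) → ℂ := fun k => (starRingEnd ℂ) (h k) * g k with hF
  have hFint : Integrable F := by
    obtain ⟨C, hC⟩ := h.decay' 0 0
    refine Integrable.bdd_mul (c := C) g.integrable ?_ ?_
    · exact (Complex.continuous_conj.comp h.continuous).aestronglyMeasurable
    · exact Eventually.of_forall fun x => by
        have hx := hC x; simp at hx; rw [Complex.norm_conj]; exact hx
  obtain ⟨G, hGint, hGeq⟩ := RadialRL.polar_repr F hFint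
  have := RadialRL.rl_one_dim G hGint
  refine this.congr fun t => (hGeq t).symm
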